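/- In ℤ/2, the mod-2 total Stiefel–Whitney computation reduces to: for I = (i_1,...,i_p) a partition of m-1, the product C(m,i_1)···C(m,i_p) of binomial coefficients is even whenever m is even; and when m = 2^{i_1} + ... + 2^{i_p} + 1 is the binary expansion shifted (m odd), the product C(m, 2^{i_1})···C(m, 2^{i_p}) is odd. -/

import Mathlib

open Finset

private lemma lucas2 (n k : ℕ) :
    n.choose k % 2 = ((n % 2).choose (k % 2) * ((n / 2).choose (k / 2))) % 2 := by
  have : Fact (Nat.Prime 2) := ⟨Nat.prime_two⟩
  exact Choose.choose_modEq_choose_mod_mul_choose_div_nat (p := 2)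

private lemma even_of_even_odd {m k : ℕ} (hm : m % 2 = 0) (hk : k % 2 = 1) :
    m.choose k % 2 = 0 := by
  rw [lucas2, hm, hk]
  simp

private lemma choose_two_pow_odd : ∀ (j m : ℕ), m.testBit j = true → m.choose (2 ^ j) % 2 = 1 := by
  intro j
  induction j with
  | zero =>
    intro m hm
    rw [Nat.testBit_zero] at hm
    simp only [pow_zero, Nat.choose_one_right]
    simpa using hm
  | succ j ih =>
    intro m hm
    rw [lucas2]
    have h1 : 2 ^ (j + 1) % 2 = 0 := by
      simp [pow_succ, Nat.mul_mod]
    have h2 : 2 ^ (j + 1) / 2 = 2 ^ j := by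
      rw [pow_succ]; exact Nat.mul_div_cancel _ (by norm_num)
    rw [h1, h2, Nat.choose_zero_right, one_mul]
    apply ih
    rwa [Nat.testBit_succ] at hm

private lemma mem_bitIndices_iff : ∀ {n j : ℕ}, j ∈ n.bitIndices ↔ n.testBit j = true := by
  intro n
  induction n using Nat.binaryRec with
  | zero => simp
  | bit b n ih =>
    intro j
    cases b
    · rw [Nat.bitIndices_bit_false]
      cases j with
      | zero => simp [Nat.testBit_bit_zero]
      | succ j =>
        rw [Nat.bit_false, Nat.testBit_add_one]
        simp [ih, Nat.mul_div_cancel_left _ (by norm_num : (0:ℕ) < 2)]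
    · rw [Nat.bitIndices_bit_true]
      cases j with
      | zero => simp [Nat.testBit_bit_zero]
      | succ j =>
        rw [Nat.bit_true, Nat.testBit_add_one]
        have : (2 * n + 1) / 2 = n := by omega
        simp [ih, this]

theorem stmt17 (m : ℕ) (hm : 2 ≤ m) :
    (Even m → ∀ (p : ℕ) (i : Fin p → ℕ), (∀ t, 1 ≤ i t) → (∑ t, i t = m - 1) →
      (∏ t, m.choose (i t)) % 2 = 0) ∧
    (Odd m → ∀ (p : ℕ) (a : Fin p → ℕ), Function.Injective a → (∑ t, 2 ^ a t = m - 1) →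
      (∏ t, m.choose (2 ^ a t)) % 2 = 1) := by
  constructor
  · intro hme p i hi1 hisum
    -- some i t is odd
    have hodd : Odd (m - 1) := Nat.Even.sub_odd (by omega) hme odd_one
    have : ∃ t, Odd (i t) := by
      by_contra h
      push_neg at h
      have heven : Even (∑ t, i t) :=
        Finset.even_sum _ fun t _ => Nat.not_odd_iff_even.mp (h t)
      rw [hisum] at heven
      exact (Nat.not_odd_iff_even.mpr heven) hodd
    obtain ⟨t, ht⟩ := this
    have hfac : m.choose (i t) % 2 = 0 :=
      even_of_even_odd (Nat.even_iff.mp hme) (Nat.odd_iff.mp ht)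
    have hdvd : m.choose (i t) ∣ ∏ t, m.choose (i t) :=
      Finset.dvd_prod_of_mem _ (Finset.mem_univ t)
    have : (2 : ℕ) ∣ ∏ t, m.choose (i t) :=
      dvd_trans (Nat.dvd_of_mod_eq_zero hfac) hdvd
    obtain ⟨c, hc⟩ := this
    omega
  · intro hmo p a ha hasum
    have hme1 : Even (m - 1) := Nat.Odd.sub_odd hmo odd_one
    -- all a t ≥ 1
    have hpos : ∀ t, 1 ≤ a t := by
      intro t
      by_contra h
      push_neg at h
      interval_cases h' : a t
      · have := Finset.add_sum_erase Finset.univ (fun s => 2 ^ a s) (Finset.mem_univ t)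
        have heq : (2:ℕ) ^ a t + ∑ s ∈ Finset.univ.erase t, 2 ^ a s = m - 1 := by
          rw [this]; exact hasum
        have heven : Even (∑ s ∈ Finset.univ.erase t, (2:ℕ) ^ a s) := by
          apply Finset.even_sum
          intro s hs
          have : a s ≠ 0 := by
            intro h0
            exact (Finset.ne_of_mem_erase hs) (ha (h0.trans h'.symm))
          exact (Nat.even_pow).mpr ⟨even_two, this⟩
        rw [h'] at heq
        simp at heq
        rw [← heq] at hme1
        rcases hme1 with ⟨c, hc⟩
        rcases heven with ⟨d, hd⟩
        omega
    -- testBit of m - 1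
    have hbit : ∀ t, (m - 1).testBit (a t) = true := by
      intro t
      rw [← mem_bitIndices_iff]
      have himg : ∑ s, (2:ℕ) ^ a s = ∑ i ∈ Finset.univ.image a, 2 ^ i :=
        (Finset.sum_image (fun x _ y _ h => ha h)).symm
      have : (m - 1).bitIndices.toFinset = Finset.univ.image a := by
        rw [← hasum, himg]
        exact Finset.toFinset_bitIndices_twoPowSum _
      have : a t ∈ (m - 1).bitIndices.toFinset := by
        rw [this]; exact Finset.mem_image_of_mem _ (Finset.mem_univ t)
      simpa using this
    have hbitm : ∀ t, m.testBit (a t) = true := by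
      intro t
      have h1t := hpos t
      obtain ⟨j, hj⟩ : ∃ j, a t = j + 1 := ⟨a t - 1, by omega⟩
      have := hbit t
      rw [hj] at this ⊢
      rw [Nat.testBit_add_one] at this ⊢
      have hm2 : m % 2 = 1 := Nat.odd_iff.mp hmo
      rwa [show m / 2 = (m - 1) / 2 by omega]
    have hfac : ∀ t, m.choose (2 ^ a t) % 2 = 1 := fun t =>
      choose_two_pow_odd _ _ (hbitm t)
    rw [Finset.prod_nat_mod]
    simp only [hfac]
    simp
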